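/- arXiv:2201.05231 — 3 statements merged into one kernel-verified Lean document; each statement's English description precedes it below -/
import Mathlib

section
/- Consider the Poisson hapax model with current-round factor α > 0 and remaining potential R. Then for every δ ∈ (0,1), P( R < E[R] − sqrt( α² Λ ln(1/δ) / A ) ) ≤ δ. -/
open MeasureTheory ProbabilityTheory Real

private lemma aux_xexp {x : ℝ} (hx : 0 ≤ x) : x * Real.exp (-x) ≤ Real.exp (-1) := by
  have h : x ≤ Real.exp (x - 1) := by
    have := Real.add_one_le_exp (x - 1); linarith
  calc x * Real.exp (-x) ≤ Real.exp (x - 1) * Real.exp (-x) :=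
        mul_le_mul_of_nonneg_right h (Real.exp_nonneg _)
    _ = Real.exp (-1) := by rw [← Real.exp_add]; ring_nf

private lemma aux_quad {x : ℝ} (hx : 0 ≤ x) : Real.exp (-x) ≤ 1 - x + x ^ 2 / 2 := by
  set g : ℝ → ℝ := fun z => 1 - z + z ^ 2 / 2 - Real.exp (-z) with hg
  have key : ∀ y : ℝ, HasDerivAt g (-1 + y + Real.exp (-y)) y := by
    intro y
    have h1 : HasDerivAt (fun z : ℝ => Real.exp (-z)) (-Real.exp (-y)) y := by
      have h := (Real.hasDerivAt_exp (-y)).comp y (hasDerivAt_neg y)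
      simp only [mul_neg, mul_one] at h
      exact h
    have h2 : HasDerivAt (fun z : ℝ => 1 - z + z ^ 2 / 2) (-1 + y) y := by
      have h3 := ((hasDerivAt_pow 2 y).div_const 2)
      have h4 := ((hasDerivAt_const y (1 : ℝ)).sub (hasDerivAt_id y)).add h3
      simp at h4
      exact h4
    have h5 := h2.sub h1
    simp at h5
    exact h5
  have mono : MonotoneOn g (Set.Ici 0) := by
    apply monotoneOn_of_deriv_nonneg (convex_Ici 0)
    · exact fun y _ => (key y).continuousAt.continuousWithinAt
    · exact fun y _ => (key y).differentiableAt.differentiableWithinAt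
    · intro y _
      rw [(key y).deriv]
      have := Real.add_one_le_exp (-y); linarith
  have h0 : g 0 ≤ g x := mono Set.self_mem_Ici hx hx
  have h0' : 1 - (0:ℝ) + 0 ^ 2 / 2 - Real.exp (-0) ≤ 1 - x + x ^ 2 / 2 - Real.exp (-x) := h0
  norm_num at h0'
  linarith

set_option maxHeartbeats 1600000 in
/-- lower-tail concentration of the remaining potential. -/
theorem remaining_potential_lower_tail
    {Ω : Type*} [MeasurableSpace Ω] (μ : Measure Ω) [IsProbabilityMeasure μ]
    {J : Type*} [Fintype J] {m : ℕ}
    (lam : J → ℝ) (hlam : ∀ j, 0 < lam j)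
    (alph : Fin m → ℝ) (halph : ∀ s, 0 < alph s)
    (N : Fin m → J → Ω → ℕ)
    (hMeas : ∀ s j, Measurable (N s j))
    (hIndep : iIndepFun (fun q : Fin m × J => N q.1 q.2) μ)
    (hDist : ∀ s j, μ.map (N s j) = poissonMeasure (lam j * alph s).toNNReal)
    (A Λ : ℝ) (hA : A = ∑ s, alph s) (hΛ : Λ = ∑ j, lam j)
    (α : ℝ) (hα : 0 < α)
    (R : Ω → ℝ)
    (hR : ∀ ω, R ω = α * ∑ j, lam j * (if ∀ s, N s j ω = 0 then (1 : ℝ) else 0))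
    (δ : ℝ) (hδ : δ ∈ Set.Ioo (0 : ℝ) 1) :
    μ {ω | R ω < (∫ ω', R ω' ∂μ) - Real.sqrt (α ^ 2 * Λ * Real.log (1 / δ) / A)} ≤
      ENNReal.ofReal δ := by
  classical
  obtain ⟨hδ0, hδ1⟩ := hδ
  set L : ℝ := Real.log (1 / δ) with hLdef
  have hL0 : 0 < L := Real.log_pos (by rw [lt_div_iff₀ hδ0]; linarith)
  -- degenerate cases
  rcases isEmpty_or_nonempty J with hJ | hJ
  · have hΛ0 : Λ = 0 := by simp [hΛ]
    have hRz : ∀ ω, R ω = 0 := by intro ω; simp [hR]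
    have : {ω | R ω < (∫ ω', R ω' ∂μ) - Real.sqrt (α ^ 2 * Λ * L / A)} = ∅ := by
      ext ω
      simp [hRz, integral_congr_ae (Filter.Eventually.of_forall hRz), hΛ0]
    rw [this]
    simp
  rcases Nat.eq_zero_or_pos m with hm | hm
  · subst hm
    have hA0 : A = 0 := by simp [hA]
    have hRc : ∀ ω, R ω = α * Λ := by
      intro ω; rw [hR, hΛ]; congr 1
      exact Finset.sum_congr rfl fun j _ => by simp [Fin.isEmpty' ]
    have hint : (∫ ω', R ω' ∂μ) = α * Λ := by
      rw [integral_congr_ae (Filter.Eventually.of_forall hRc)]; simp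
    have : {ω | R ω < (∫ ω', R ω' ∂μ) - Real.sqrt (α ^ 2 * Λ * L / A)} = ∅ := by
      ext ω; simp [hRc, hint, hA0]
    rw [this]; simp
  -- main case
  have hmne : Nonempty (Fin m) := ⟨⟨0, hm⟩⟩
  have hA0 : 0 < A := by
    rw [hA]; exact Finset.sum_pos (fun s _ => halph s) Finset.univ_nonempty
  have hΛ0 : 0 < Λ := by
    rw [hΛ]; exact Finset.sum_pos (fun j _ => hlam j) Finset.univ_nonempty
  set p : J → ℝ := fun j => Real.exp (-(lam j * A)) with hp_def
  have hp_pos : ∀ j, 0 < p j := fun j => Real.exp_pos _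
  have hp_le1 : ∀ j, p j ≤ 1 := fun j =>
    Real.exp_le_one_iff.2 (by nlinarith [(hlam j).le, hA0.le])
  set E : J → Set Ω := fun j => {ω | ∀ s, N s j ω = 0} with hE_def
  have hE_eq : ∀ j, E j = ⋂ s, N s j ⁻¹' {0} := by
    intro j; ext ω; simp [hE_def, Set.mem_iInter]
  have hE_meas : ∀ j, MeasurableSet (E j) := by
    intro j; rw [hE_eq]
    exact MeasurableSet.iInter fun s => hMeas s j (measurableSet_singleton 0)
  set X : J → Ω → ℝ := fun j ω => if ω ∈ E j then 1 else 0 with hX_def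
  have hX_meas : ∀ j, Measurable (X j) := fun j =>
    Measurable.ite (hE_meas j) measurable_const measurable_const
  have hX01 : ∀ j ω, 0 ≤ X j ω ∧ X j ω ≤ 1 := by
    intro j ω; by_cases h : ω ∈ E j <;> simp [hX_def, h]
  -- single Poisson zero probability
  have hsingle : ∀ s j, μ (N s j ⁻¹' {0}) =
      ENNReal.ofReal (Real.exp (-(lam j * alph s))) := by
    intro s j
    have h0 : μ (N s j ⁻¹' {0}) = μ.map (N s j) {0} :=
      (Measure.map_apply (hMeas s j) (measurableSet_singleton 0)).symm
    rw [h0, hDist s j, poissonMeasure_singleton]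
    have hnn : 0 ≤ lam j * alph s := le_of_lt (mul_pos (hlam j) (halph s))
    norm_num [Real.coe_toNNReal _ hnn]
  -- intersection probabilities
  have hinter : ∀ S : Finset J, μ (⋂ j ∈ S, E j) = ENNReal.ofReal (∏ j ∈ S, p j) := by
    intro S
    have hEq : (⋂ j ∈ S, E j) =
        ⋂ q ∈ (Finset.univ ×ˢ S : Finset (Fin m × J)),
          (fun q : Fin m × J => N q.1 q.2) q ⁻¹' {0} := by
      ext ω
      simp only [Set.mem_iInter, hE_eq, Set.mem_preimage, Set.mem_singleton_iff,
        Finset.mem_product, Finset.mem_univ, true_and]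
      constructor
      · rintro h ⟨s, j⟩ hj; exact h j hj s
      · intro h j hj s; exact h (s, j) hj
    rw [hEq, hIndep.measure_inter_preimage_eq_mul _ (fun q _ => measurableSet_singleton 0)]
    have hrw : ∀ q ∈ (Finset.univ ×ˢ S : Finset (Fin m × J)),
        μ ((fun q : Fin m × J => N q.1 q.2) q ⁻¹' {0})
          = ENNReal.ofReal (Real.exp (-(lam q.2 * alph q.1))) :=
      fun q _ => hsingle q.1 q.2
    rw [Finset.prod_congr rfl hrw, Finset.prod_product]
    rw [Finset.prod_comm]
    have : ∀ j ∈ S, ∏ s : Fin m, ENNReal.ofReal (Real.exp (-(lam j * alph s)))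
        = ENNReal.ofReal (p j) := by
      intro j _
      rw [← ENNReal.ofReal_prod_of_nonneg (fun s _ => (Real.exp_pos _).le),
        ← Real.exp_sum]
      congr 1
      rw [hp_def]
      congr 1
      rw [hA, Finset.mul_sum, ← Finset.sum_neg_distrib]
    rw [Finset.prod_congr rfl this,
      ← ENNReal.ofReal_prod_of_nonneg (fun j _ => (hp_pos j).le)]
  have hinter_toReal : ∀ S : Finset J, (μ (⋂ j ∈ S, E j)).toReal = ∏ j ∈ S, p j := by
    intro S
    rw [hinter S, ENNReal.toReal_ofReal (Finset.prod_nonneg fun j _ => (hp_pos j).le)]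
  have hmuE : ∀ j, (μ (E j)).toReal = p j := by
    intro j
    have := hinter_toReal {j}
    simpa using this
  -- X as indicator
  have hX_ind : ∀ j, X j = (E j).indicator (fun _ => (1 : ℝ)) := by
    intro j; ext ω; simp [hX_def, Set.indicator_apply]
  have hX_int : ∀ j, Integrable (X j) μ := by
    intro j; rw [hX_ind]
    exact (integrable_const (1:ℝ)).indicator (hE_meas j)
  have hX_integral : ∀ j, ∫ ω, X j ω ∂μ = p j := by
    intro j
    rw [hX_ind]
    rw [integral_indicator_const _ (hE_meas j)]
    rw [measureReal_def, smul_eq_mul, mul_one, hmuE j]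
  set T : Ω → ℝ := fun ω => ∑ j, lam j * X j ω with hT_def
  have hT_meas : Measurable T := by
    apply Finset.measurable_sum
    exact fun j _ => (hX_meas j).const_mul (lam j)
  have hT_nonneg : ∀ ω, 0 ≤ T ω :=
    fun ω => Finset.sum_nonneg fun j _ => mul_nonneg (hlam j).le (hX01 j ω).1
  have hRT : ∀ ω, R ω = α * T ω := by
    intro ω; rw [hR]
    congr 1
  set ET : ℝ := ∑ j, lam j * p j with hET_def
  have hET_pos : 0 < ET :=
    Finset.sum_pos (fun j _ => mul_pos (hlam j) (hp_pos j)) Finset.univ_nonempty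
  have hT_integral : ∫ ω, T ω ∂μ = ET := by
    rw [hT_def]
    rw [integral_finset_sum _ (fun j _ => (hX_int j).const_mul (lam j))]
    exact Finset.sum_congr rfl fun j _ => by rw [integral_const_mul, hX_integral]
  have hR_integral : (∫ ω', R ω' ∂μ) = α * ET := by
    rw [integral_congr_ae (Filter.Eventually.of_forall hRT), integral_const_mul, hT_integral]
  -- product of indicators
  have hprodX : ∀ (S : Finset J) (ω : Ω), (∏ j ∈ S, X j ω)
      = Set.indicator (⋂ j ∈ S, E j) (fun _ => (1 : ℝ)) ω := by
    intro S ω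
    simp only [hX_def]
    rw [Finset.prod_boole, Set.indicator_apply]
    by_cases h : ω ∈ ⋂ j ∈ S, E j
    · rw [if_pos (by intro j hj; exact Set.mem_iInter₂.1 h j hj), if_pos h]
    · rw [if_neg (fun hall => h (Set.mem_iInter₂.2 hall)), if_neg h]
  -- mgf formula
  have hmgf : ∀ t : ℝ, ∫ ω, Real.exp (t * T ω) ∂μ
      = ∏ j, ((Real.exp (t * lam j) - 1) * p j + 1) := by
    intro t
    set c : J → ℝ := fun j => Real.exp (t * lam j) - 1 with hc_def
    have hpt : ∀ ω, Real.exp (t * T ω)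
        = ∑ S ∈ (Finset.univ : Finset J).powerset,
            (∏ j ∈ S, c j) * Set.indicator (⋂ j ∈ S, E j) (fun _ => (1 : ℝ)) ω := by
      intro ω
      have h1 : Real.exp (t * T ω) = ∏ j, (c j * X j ω + 1) := by
        simp only [hT_def]
        rw [Finset.mul_sum, Real.exp_sum]
        apply Finset.prod_congr rfl
        intro j _
        by_cases h : ω ∈ E j
        · simp [hX_def, hc_def, h, mul_comm]
        · simp [hX_def, h]
      rw [h1, Finset.prod_add]
      apply Finset.sum_congr rfl
      intro S _
      rw [Finset.prod_const_one, mul_one, Finset.prod_mul_distrib, hprodX]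
    rw [integral_congr_ae (Filter.Eventually.of_forall hpt)]
    rw [integral_finset_sum _ (fun S _ =>
      (((integrable_const (1:ℝ)).indicator
        (S.measurableSet_biInter (fun j _ => hE_meas j))).const_mul _))]
    have hterm : ∀ S ∈ (Finset.univ : Finset J).powerset,
        ∫ ω, (∏ j ∈ S, c j) * Set.indicator (⋂ j ∈ S, E j) (fun _ => (1:ℝ)) ω ∂μ
        = ∏ j ∈ S, (c j * p j) := by
      intro S _
      rw [integral_const_mul, integral_indicator_const _
        (S.measurableSet_biInter (fun j _ => hE_meas j))]
      rw [measureReal_def, hinter_toReal S]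
      rw [smul_eq_mul, mul_one, ← Finset.prod_mul_distrib]
    rw [Finset.sum_congr rfl hterm]
    have := Finset.prod_add (fun j => c j * p j) (fun _ => (1:ℝ)) (Finset.univ : Finset J)
    simp only [Finset.prod_const_one, mul_one] at this
    rw [← this]
  -- setup for Chernoff
  set u : ℝ := Real.sqrt (Λ * L / A) with hu_def
  have hu0 : 0 < u := Real.sqrt_pos.2 (div_pos (mul_pos hΛ0 hL0) hA0)
  have hu2 : u ^ 2 = Λ * L / A := Real.sq_sqrt (div_pos (mul_pos hΛ0 hL0) hA0).le
  have hsq : Real.sqrt (α ^ 2 * Λ * L / A) = α * u := by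
    rw [hu_def, show α ^ 2 * Λ * L / A = α ^ 2 * (Λ * L / A) by ring,
      Real.sqrt_mul (sq_nonneg α), Real.sqrt_sq hα.le]
  set θ : ℝ := u * (Real.exp 1 * A) / Λ with hθ_def
  have hθ0 : 0 < θ := div_pos (mul_pos hu0 (mul_pos (Real.exp_pos 1) hA0)) hΛ0
  set v : ℝ := ∑ j, lam j ^ 2 * p j with hv_def
  have hv_nonneg : 0 ≤ v :=
    Finset.sum_nonneg fun j _ => mul_nonneg (sq_nonneg _) (hp_pos j).le
  have hv_le : v ≤ Λ / (Real.exp 1 * A) := by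
    rw [hv_def, hΛ, Finset.sum_div]
    apply Finset.sum_le_sum
    intro j _
    have hx := aux_xexp (x := lam j * A) (mul_pos (hlam j) hA0).le
    have h1 : lam j ^ 2 * p j = lam j * ((lam j * A) * Real.exp (-(lam j * A))) / A := by
      simp only [hp_def]
      field_simp
    calc lam j ^ 2 * p j = lam j * ((lam j * A) * Real.exp (-(lam j * A))) / A := h1
      _ ≤ lam j * Real.exp (-1) / A := by
          gcongr
          exact (hlam j).le
      _ = lam j / (Real.exp 1 * A) := by
          rw [Real.exp_neg]; field_simp
  -- integrability of exp(-θ T)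
  have h_int : Integrable (fun ω => Real.exp (-θ * T ω)) μ := by
    apply Integrable.mono' (integrable_const (1:ℝ))
    · exact ((hT_meas.const_mul (-θ)).exp).aestronglyMeasurable
    · apply Filter.Eventually.of_forall
      intro ω
      rw [Real.norm_eq_abs, abs_of_nonneg (Real.exp_nonneg _)]
      apply Real.exp_le_one_iff.2
      have := hT_nonneg ω
      nlinarith
  -- Chernoff
  have hch := measure_le_le_exp_mul_mgf (μ := μ) (X := T) (ET - u)
    (t := -θ) (by linarith) h_int
  have hmgf_val : mgf T μ (-θ) = ∏ j, ((Real.exp (-θ * lam j) - 1) * p j + 1) := by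
    rw [mgf]; exact hmgf (-θ)
  -- bound the product
  have hprod_le : ∏ j, ((Real.exp (-θ * lam j) - 1) * p j + 1)
      ≤ Real.exp (∑ j, (Real.exp (-θ * lam j) - 1) * p j) := by
    rw [Real.exp_sum]
    apply Finset.prod_le_prod
    · intro j _
      have h1 : -1 ≤ Real.exp (-θ * lam j) - 1 := by
        have := Real.exp_nonneg (-θ * lam j); linarith
      have h2 : Real.exp (-θ * lam j) - 1 ≤ 0 := by
        have : Real.exp (-θ * lam j) ≤ 1 :=
          Real.exp_le_one_iff.2 (by nlinarith [(hlam j).le])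
        linarith
      nlinarith [(hp_pos j).le, hp_le1 j]
    · intro j _
      have := Real.add_one_le_exp ((Real.exp (-θ * lam j) - 1) * p j)
      linarith
  have hsum_le : ∑ j, (Real.exp (-θ * lam j) - 1) * p j ≤ -θ * ET + θ ^ 2 / 2 * v := by
    have hstep : ∀ j ∈ (Finset.univ : Finset J),
        (Real.exp (-θ * lam j) - 1) * p j
          ≤ -θ * (lam j * p j) + θ ^ 2 / 2 * (lam j ^ 2 * p j) := by
      intro j _
      have hq := aux_quad (x := θ * lam j) (mul_pos hθ0 (hlam j)).le
      have hpj := (hp_pos j).le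
      have h3 : Real.exp (-θ * lam j) - 1 ≤ -(θ * lam j) + (θ * lam j) ^ 2 / 2 := by
        rw [neg_mul]; linarith
      calc (Real.exp (-θ * lam j) - 1) * p j
          ≤ (-(θ * lam j) + (θ * lam j) ^ 2 / 2) * p j :=
            mul_le_mul_of_nonneg_right h3 hpj
        _ = -θ * (lam j * p j) + θ ^ 2 / 2 * (lam j ^ 2 * p j) := by ring
    calc ∑ j, (Real.exp (-θ * lam j) - 1) * p j
        ≤ ∑ j, (-θ * (lam j * p j) + θ ^ 2 / 2 * (lam j ^ 2 * p j)) :=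
          Finset.sum_le_sum hstep
      _ = -θ * ET + θ ^ 2 / 2 * v := by
          rw [Finset.sum_add_distrib, ← Finset.mul_sum, ← Finset.mul_sum, hET_def, hv_def]
  -- final exponent bound
  have hθu : θ * u = Real.exp 1 * L := by
    rw [hθ_def]
    have h2 : u * (Real.exp 1 * A) / Λ * u = u ^ 2 * (Real.exp 1 * A) / Λ := by ring
    rw [h2, hu2]; field_simp
  have hθ2v : θ ^ 2 / 2 * v ≤ Real.exp 1 * L / 2 := by
    calc θ ^ 2 / 2 * v ≤ θ ^ 2 / 2 * (Λ / (Real.exp 1 * A)) := by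
          gcongr
      _ = Real.exp 1 * L / 2 := by
          rw [hθ_def]
          have : (u * (Real.exp 1 * A) / Λ) ^ 2 = u ^ 2 * (Real.exp 1 * A) ^ 2 / Λ ^ 2 := by ring
          rw [this, hu2]
          have he := (Real.exp_pos 1).ne'
          field_simp
  have hexp_bound : θ * (ET - u) + (-θ * ET + θ ^ 2 / 2 * v) ≤ -L := by
    have h2e : (2:ℝ) ≤ Real.exp 1 := by
      have := Real.add_one_le_exp 1; linarith
    have : θ * (ET - u) + (-θ * ET + θ ^ 2 / 2 * v)
        = -(θ * u) + θ ^ 2 / 2 * v := by ring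
    rw [this, hθu]
    nlinarith
  -- putting it together
  have hfin : (μ {ω | T ω ≤ ET - u}).toReal ≤ δ := by
    calc (μ {ω | T ω ≤ ET - u}).toReal
        ≤ Real.exp (-(-θ) * (ET - u)) * mgf T μ (-θ) := hch
      _ = Real.exp (θ * (ET - u)) * ∏ j, ((Real.exp (-θ * lam j) - 1) * p j + 1) := by
          rw [hmgf_val, neg_neg]
      _ ≤ Real.exp (θ * (ET - u)) * Real.exp (∑ j, (Real.exp (-θ * lam j) - 1) * p j) :=
          mul_le_mul_of_nonneg_left hprod_le (Real.exp_nonneg _)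
      _ = Real.exp (θ * (ET - u) + ∑ j, (Real.exp (-θ * lam j) - 1) * p j) := by
          rw [← Real.exp_add]
      _ ≤ Real.exp (-L) := by
          apply Real.exp_le_exp.2
          linarith [hsum_le, hexp_bound]
      _ = δ := by
          rw [hLdef, one_div, Real.log_inv, neg_neg, Real.exp_log hδ0]
  have hsub : {ω | R ω < (∫ ω', R ω' ∂μ) - Real.sqrt (α ^ 2 * Λ * L / A)}
      ⊆ {ω | T ω ≤ ET - u} := by
    intro ω hω
    simp only [Set.mem_setOf_eq] at hω ⊢
    rw [hRT, hR_integral, hsq] at hω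
    nlinarith
  calc μ {ω | R ω < (∫ ω', R ω' ∂μ) - Real.sqrt (α ^ 2 * Λ * L / A)}
      ≤ μ {ω | T ω ≤ ET - u} := measure_mono hsub
    _ ≤ ENNReal.ofReal δ :=
        (ENNReal.le_ofReal_iff_toReal_le (measure_ne_top μ _) hδ0.le).2 hfin
end

section
/- Consider the Poisson hapax model with current-round factor α > 0, remaining potential R, nonnegative weights a_1,…,a_m, and Good–Turing statistic G. Then E[R] = α · Σ_{j∈J} λ_j exp(−λ_j A), E[G] = (Σ_{s=1}^m a_s α_s) · Σ_{j∈J} λ_j exp(−λ_j A), and consequently E[R] − E[G] = ( α − Σ_{s=1}^m a_s α_s ) · Σ_{j∈J} λ_j exp(−λ_j A). -/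
open MeasureTheory ProbabilityTheory Real

/-- expectations of the remaining potential and the Good–Turing statistic,
and the bias identity. -/
theorem good_turing_bias
    {Ω : Type*} [MeasurableSpace Ω] (μ : Measure Ω) [IsProbabilityMeasure μ]
    {J : Type*} [Fintype J] {m : ℕ}
    (lam : J → ℝ) (hlam : ∀ j, 0 < lam j)
    (alph : Fin m → ℝ) (halph : ∀ s, 0 < alph s)
    (N : Fin m → J → Ω → ℕ)
    (hMeas : ∀ s j, Measurable (N s j))
    (hIndep : iIndepFun (fun q : Fin m × J => N q.1 q.2) μ)
    (hDist : ∀ s j, μ.map (N s j) = poissonMeasure (lam j * alph s).toNNReal)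
    (A Λ : ℝ) (hA : A = ∑ s, alph s) (hΛ : Λ = ∑ j, lam j)
    (α : ℝ) (hα : 0 < α)
    (R : Ω → ℝ)
    (hR : ∀ ω, R ω = α * ∑ j, lam j * (if ∀ s, N s j ω = 0 then (1 : ℝ) else 0))
    (a : Fin m → ℝ) (ha : ∀ s, 0 ≤ a s)
    (G : Ω → ℝ)
    (hG : ∀ ω, G ω = ∑ j, ∑ s,
      a s * (if N s j ω = 1 ∧ ∀ l, l ≠ s → N l j ω = 0 then (1 : ℝ) else 0)) :
    (∫ ω, R ω ∂μ = α * ∑ j, lam j * exp (-(lam j) * A)) ∧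
    (∫ ω, G ω ∂μ = (∑ s, a s * alph s) * ∑ j, lam j * exp (-(lam j) * A)) ∧
    ((∫ ω, R ω ∂μ) - ∫ ω, G ω ∂μ =
      (α - ∑ s, a s * alph s) * ∑ j, lam j * exp (-(lam j) * A)) := by
  classical
  have hra : ∀ (s : Fin m) (j : J), ((lam j * alph s).toNNReal : ℝ) = lam j * alph s :=
    fun s j => Real.coe_toNNReal _ (mul_nonneg (hlam j).le (halph s).le)
  have hsingle : ∀ (s : Fin m) (j : J) (n : ℕ),
      μ (N s j ⁻¹' {n}) = ENNReal.ofReal (poissonPMFReal (lam j * alph s).toNNReal n) := by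
    intro s j n
    rw [← Measure.map_apply (hMeas s j) (measurableSet_singleton n), hDist s j,
      poissonMeasure_singleton]
    rfl
  have hsum : ∀ j : J, ∑ s : Fin m, -(lam j * alph s) = -(lam j) * A := by
    intro j
    simp [hA, Finset.mul_sum]
  have hprod : ∀ (j : J) (T : Fin m → Set ℕ),
      μ (⋂ s, N s j ⁻¹' T s) = ∏ s, μ (N s j ⁻¹' T s) := by
    intro j T
    have hinj : Function.Injective (fun s : Fin m => ((s, j) : Fin m × J)) := fun a b h => by
      simpa using congrArg Prod.fst h
    have h := hIndep.measure_inter_preimage_eq_mul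
      (Finset.univ.map ⟨fun s : Fin m => (s, j), hinj⟩)
      (sets := fun q => T q.1) (fun q _ => .of_discrete)
    simp only [Finset.prod_map, Function.Embedding.coeFn_mk] at h
    have hset : (⋂ q ∈ Finset.univ.map ⟨fun s : Fin m => (s, j), hinj⟩,
        (fun q : Fin m × J => N q.1 q.2) q ⁻¹' T q.1) = ⋂ s, N s j ⁻¹' T s := by
      ext ω
      simp only [Set.mem_iInter, Set.mem_preimage, Finset.mem_map,
        Function.Embedding.coeFn_mk, Finset.mem_univ, true_and]
      constructor
      · intro h s; exact h (s, j) ⟨s, rfl⟩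
      · rintro h q ⟨s, rfl⟩; exact h s
    rw [hset] at h
    exact h
  have h0 : ∀ (s : Fin m) (j : J), μ (N s j ⁻¹' {0})
      = ENNReal.ofReal (exp (-(lam j * alph s))) := by
    intro s j
    rw [hsingle]
    congr 1
    simp [poissonPMFReal, hra]
  have h1 : ∀ (s : Fin m) (j : J), μ (N s j ⁻¹' {1})
      = ENNReal.ofReal (lam j * alph s * exp (-(lam j * alph s))) := by
    intro s j
    rw [hsingle]
    congr 1
    simp [poissonPMFReal, hra]
    ring
  have hall0 : ∀ j : J, μ {ω | ∀ s, N s j ω = 0} = ENNReal.ofReal (exp (-(lam j) * A)) := by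
    intro j
    have hset : {ω | ∀ s, N s j ω = 0} = ⋂ s, N s j ⁻¹' {0} := by
      ext ω; simp
    rw [hset, hprod j (fun _ => {0})]
    simp only [h0]
    rw [← ENNReal.ofReal_prod_of_nonneg (fun s _ => (exp_pos _).le), ← Real.exp_sum, hsum j]
  have hhapset : ∀ (s : Fin m) (j : J),
      {ω | N s j ω = 1 ∧ ∀ l, l ≠ s → N l j ω = 0}
        = ⋂ l, N l j ⁻¹' (if l = s then {1} else {0}) := by
    intro s j
    ext ω
    simp only [Set.mem_setOf_eq, Set.mem_iInter, Set.mem_preimage]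
    constructor
    · rintro ⟨hs1, hrest⟩ l
      by_cases hl : l = s
      · subst hl; simp [hs1]
      · simp [hl, hrest l hl]
    · intro h
      refine ⟨by simpa using h s, fun l hl => by simpa [hl] using h l⟩
  have hhap : ∀ (s : Fin m) (j : J),
      μ {ω | N s j ω = 1 ∧ ∀ l, l ≠ s → N l j ω = 0}
        = ENNReal.ofReal (lam j * alph s * exp (-(lam j) * A)) := by
    intro s j
    rw [hhapset s j, hprod]
    have hterm : ∀ l : Fin m, μ (N l j ⁻¹' (if l = s then {1} else {0}))
        = ENNReal.ofReal ((if l = s then lam j * alph s else 1) * exp (-(lam j * alph l))) := by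
      intro l
      by_cases hl : l = s
      · subst hl; simp [h1 l j]
      · simp [hl, h0 l j]
    simp only [hterm]
    rw [← ENNReal.ofReal_prod_of_nonneg (fun l _ => mul_nonneg (by split_ifs with h; exacts [mul_nonneg (hlam j).le (halph _).le, zero_le_one]) (exp_pos _).le)]
    congr 1
    rw [Finset.prod_mul_distrib, Finset.prod_ite_eq' Finset.univ s (fun _ => lam j * alph s),
      ← Real.exp_sum, hsum j]
    simp
  have hEmeas : ∀ j : J, MeasurableSet {ω | ∀ s, N s j ω = 0} := by
    intro j
    have hset : {ω | ∀ s, N s j ω = 0} = ⋂ s, N s j ⁻¹' {0} := by ext ω; simp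
    rw [hset]
    exact MeasurableSet.iInter fun s => (hMeas s j) (measurableSet_singleton 0)
  have hHmeas : ∀ (s : Fin m) (j : J),
      MeasurableSet {ω | N s j ω = 1 ∧ ∀ l, l ≠ s → N l j ω = 0} := by
    intro s j
    rw [hhapset s j]
    exact MeasurableSet.iInter fun l => (hMeas l j) .of_discrete
  have hind : ∀ (p : Ω → Prop) [DecidablePred p], MeasurableSet {ω | p ω} →
      (∫ ω, (if p ω then (1 : ℝ) else 0) ∂μ) = (μ {ω | p ω}).toReal := by
    intro p _ hp
    have heq : (fun ω => if p ω then (1 : ℝ) else 0) = {ω | p ω}.indicator (fun _ => 1) := by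
      ext ω; by_cases h : p ω <;> simp [h]
    rw [heq, integral_indicator_const (1 : ℝ) hp, smul_eq_mul, mul_one, measureReal_def]
  -- integral of R
  have hRint : ∫ ω, R ω ∂μ = α * ∑ j, lam j * exp (-(lam j) * A) := by
    have hfun : ∀ j : J, (fun ω => lam j * (if ∀ s, N s j ω = 0 then (1 : ℝ) else 0))
        = {ω | ∀ s, N s j ω = 0}.indicator (fun _ => lam j) := by
      intro j; ext ω; by_cases h : ∀ s, N s j ω = 0 <;> simp [h]
    calc ∫ ω, R ω ∂μ
        = ∫ ω, α * ∑ j, lam j * (if ∀ s, N s j ω = 0 then (1 : ℝ) else 0) ∂μ := by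
          simp only [hR]
      _ = α * ∑ j, ∫ ω, lam j * (if ∀ s, N s j ω = 0 then (1 : ℝ) else 0) ∂μ := by
          rw [integral_const_mul, integral_finset_sum]
          intro j _
          rw [hfun j]
          exact (integrable_const (lam j)).indicator (hEmeas j)
      _ = α * ∑ j, lam j * exp (-(lam j) * A) := by
          congr 1
          refine Finset.sum_congr rfl fun j _ => ?_
          rw [integral_const_mul, hind _ (hEmeas j), hall0 j,
            ENNReal.toReal_ofReal (exp_pos _).le]
  -- integral of G
  have hGint : ∫ ω, G ω ∂μ = (∑ s, a s * alph s) * ∑ j, lam j * exp (-(lam j) * A) := by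
    have hfun : ∀ (s : Fin m) (j : J),
        (fun ω => a s * (if N s j ω = 1 ∧ ∀ l, l ≠ s → N l j ω = 0 then (1 : ℝ) else 0))
        = {ω | N s j ω = 1 ∧ ∀ l, l ≠ s → N l j ω = 0}.indicator (fun _ => a s) := by
      intro s j; ext ω
      by_cases h : N s j ω = 1 ∧ ∀ l, l ≠ s → N l j ω = 0 <;>
        simp [Set.indicator_apply, h]
    have hint : ∀ (s : Fin m) (j : J),
        Integrable (fun ω => a s * (if N s j ω = 1 ∧ ∀ l, l ≠ s → N l j ω = 0
          then (1 : ℝ) else 0)) μ := by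
      intro s j
      rw [hfun s j]
      exact (integrable_const (a s)).indicator (hHmeas s j)
    calc ∫ ω, G ω ∂μ
        = ∫ ω, ∑ j, ∑ s, a s *
            (if N s j ω = 1 ∧ ∀ l, l ≠ s → N l j ω = 0 then (1 : ℝ) else 0) ∂μ := by
          simp only [hG]
      _ = ∑ j, ∑ s, ∫ ω, a s *
            (if N s j ω = 1 ∧ ∀ l, l ≠ s → N l j ω = 0 then (1 : ℝ) else 0) ∂μ := by
          rw [integral_finset_sum]
          · exact Finset.sum_congr rfl fun j _ => integral_finset_sum _ fun s _ => hint s j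
          · exact fun j _ => integrable_finset_sum _ fun s _ => hint s j
      _ = ∑ j, ∑ s, a s * (lam j * alph s * exp (-(lam j) * A)) := by
          refine Finset.sum_congr rfl fun j _ => Finset.sum_congr rfl fun s _ => ?_
          rw [integral_const_mul, hind _ (hHmeas s j), hhap s j,
            ENNReal.toReal_ofReal (mul_nonneg (mul_nonneg (hlam j).le (halph s).le) (exp_pos _).le)]
      _ = (∑ s, a s * alph s) * ∑ j, lam j * exp (-(lam j) * A) := by
          rw [Finset.sum_mul_sum, Finset.sum_comm]
          exact Finset.sum_congr rfl fun s _ => Finset.sum_congr rfl fun j _ => by ring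
  exact ⟨hRint, hGint, by rw [hRint, hGint]; ring⟩
end

section
/- Consider the Poisson hapax model with nonnegative weights a_1,…,a_m and Good–Turing statistic G = Σ_{j∈J} X_j, where X_j = Σ_{s=1}^m a_s · 1_{H_{s,j}}. Set b = Σ_{s=1}^m a_s and v = (Σ_{s=1}^m a_s² α_s) · Λ. Then the random variables (X_j)_{j∈J} are mutually independent, each satisfies 0 ≤ X_j ≤ b almost surely and Σ_{j∈J} E[X_j²] ≤ v, and for every δ ∈ (0,1), P( G − E[G] > sqrt(2 v ln(1/δ)) + (b/3) ln(1/δ) ) ≤ δ. -/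
open MeasureTheory ProbabilityTheory Real

section Aux

lemma two_mul_three_pow_le_factorial (n : ℕ) : 2 * 3 ^ n ≤ Nat.factorial (n + 2) := by
  induction n with
  | zero => simp [Nat.factorial]
  | succ n ih =>
    have h : Nat.factorial (n + 3) = (n + 3) * Nat.factorial (n + 2) := rfl
    calc 2 * 3 ^ (n + 1) = 3 * (2 * 3 ^ n) := by ring
    _ ≤ 3 * Nat.factorial (n + 2) := by omega
    _ ≤ (n + 3) * Nat.factorial (n + 2) := Nat.mul_le_mul_right _ (by omega)
    _ = Nat.factorial (n + 3) := h.symm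

set_option maxHeartbeats 2000000 in
lemma exp_le_one_add_add_sq {u : ℝ} (hu : 0 ≤ u) (hu3 : u < 3) :
    Real.exp u ≤ 1 + u + u ^ 2 / (2 * (1 - u / 3)) := by
  have hgeo : u / 3 < 1 := by linarith
  have hgeo0 : 0 ≤ u / 3 := by linarith
  have hsum : Summable (fun n => u ^ n / n.factorial) := Real.summable_pow_div_factorial u
  have hsum1 : Summable (fun n => u ^ (n + 1) / (n + 1).factorial) :=
    (summable_nat_add_iff 1).mpr hsum
  have hsum2 : Summable (fun n => u ^ (n + 2) / (n + 2).factorial) :=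
    (summable_nat_add_iff 2).mpr hsum
  have hexp : Real.exp u = ∑' n, u ^ n / n.factorial := by
    rw [Real.exp_eq_exp_ℝ]
    exact (NormedSpace.expSeries_div_hasSum_exp u).tsum_eq.symm
  have hsplit : Real.exp u = 1 + u + ∑' n, u ^ (n + 2) / (n + 2).factorial := by
    rw [hexp, hsum.tsum_eq_zero_add, hsum1.tsum_eq_zero_add]
    norm_num [Nat.factorial]
    rw [← add_assoc]
  have hterm : ∀ n : ℕ, u ^ (n + 2) / (n + 2).factorial ≤ u ^ 2 / 2 * (u / 3) ^ n := by
    intro n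
    have hfac : (2 * 3 ^ n : ℝ) ≤ ((n + 2).factorial : ℝ) := by
      exact_mod_cast two_mul_three_pow_le_factorial n
    have h1 : u ^ (n + 2) / (n + 2).factorial ≤ u ^ (n + 2) / (2 * 3 ^ n) := by
      gcongr
    refine h1.trans_eq ?_
    have h3 : (3:ℝ) ^ n ≠ 0 := by positivity
    rw [div_pow, show u ^ (n + 2) = u ^ 2 * u ^ n by ring]
    field_simp
  have hgeosum : Summable (fun n : ℕ => u ^ 2 / 2 * (u / 3) ^ n) :=
    (summable_geometric_of_lt_one hgeo0 hgeo).mul_left _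
  have htail : ∑' n, u ^ (n + 2) / (n + 2).factorial ≤ u ^ 2 / (2 * (1 - u / 3)) := by
    calc ∑' n, u ^ (n + 2) / (n + 2).factorial ≤ ∑' n : ℕ, u ^ 2 / 2 * (u / 3) ^ n :=
          Summable.tsum_le_tsum hterm hsum2 hgeosum
    _ = u ^ 2 / 2 * (1 - u / 3)⁻¹ := by
          rw [tsum_mul_left, tsum_geometric_of_lt_one hgeo0 hgeo]
    _ = u ^ 2 / (2 * (1 - u / 3)) := by
          rw [← div_div, div_eq_mul_inv (u ^ 2 / 2) (1 - u / 3)]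
  rw [hsplit]
  linarith

lemma iIndepFun_grouping {Ω : Type*} [MeasurableSpace Ω] {μ : Measure Ω}
    {ι κ β : Type*} [Fintype ι] [MeasurableSpace β]
    (f : ι × κ → Ω → β) (hmeas : ∀ p, Measurable (f p))
    (h : iIndepFun f μ) :
    iIndepFun
      (fun j ω (s : ι) => f (s, j) ω) μ := by
  classical
  rw [iIndepFun_iff_iIndep]
  set Y : κ → Ω → (ι → β) := fun j ω s => f (s, j) ω with hY
  let boxs : Set (Set (ι → β)) := Set.pi (Set.univ : Set ι) ''
    Set.pi (Set.univ : Set ι) fun _ : ι => { s : Set β | MeasurableSet s }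
  let pisys : κ → Set (Set Ω) := fun j => { s : Set Ω | ∃ t ∈ boxs, Y j ⁻¹' t = s }
  have hπ_pi : ∀ j, IsPiSystem (pisys j) := fun j => IsPiSystem.comap isPiSystem_pi _
  have hπ_gen : ∀ j, (MeasurableSpace.pi.comap (Y j)) = MeasurableSpace.generateFrom (pisys j) := by
    intro j
    rw [generateFrom_pi.symm, MeasurableSpace.comap_generateFrom]
    rfl
  have h_le : ∀ j, (MeasurableSpace.pi.comap (Y j)) ≤ ‹MeasurableSpace Ω› := fun j =>
    Measurable.comap_le (measurable_pi_iff.mpr fun s => hmeas (s, j))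
  refine iIndepSets.iIndep h_le pisys hπ_pi hπ_gen ?_
  rw [iIndepSets_iff]
  intro S sets hsets
  have hchoice : ∀ j ∈ S, ∃ E : ι → Set β, (∀ s, MeasurableSet (E s)) ∧
      sets j = ⋂ s : ι, f (s, j) ⁻¹' E s := by
    intro j hj
    obtain ⟨t, ⟨E, hE, hEt⟩, hts⟩ := hsets j hj
    refine ⟨E, fun s => hE s (Set.mem_univ s), ?_⟩
    rw [← hts, ← hEt]
    ext ω
    simp [Set.mem_pi, Y]
  choose! E hEmeas hEeq using hchoice
  set E' : ι × κ → Set β := fun p => E p.2 p.1 with hE'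
  have hmain := h.measure_inter_preimage_eq_mul (Finset.univ ×ˢ S)
    (sets := E') (fun p hp => hEmeas p.2 (Finset.mem_product.mp hp).2 p.1)
  have hset_eq : (⋂ j ∈ S, sets j) = ⋂ p ∈ Finset.univ ×ˢ S, f p ⁻¹' E' p := by
    ext ω
    simp only [Set.mem_iInter, Finset.mem_product, Finset.mem_univ, true_and]
    constructor
    · rintro hω ⟨s, j⟩ hj
      have := hω j hj
      rw [hEeq j hj] at this
      exact Set.mem_iInter.mp this s
    · intro hω j hj
      rw [hEeq j hj]
      exact Set.mem_iInter.mpr fun s => hω (s, j) hj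
  have hsingle : ∀ j ∈ S, μ (sets j) = ∏ s : ι, μ (f (s, j) ⁻¹' E j s) := by
    intro j hj
    have h1 := h.measure_inter_preimage_eq_mul (Finset.univ ×ˢ ({j} : Finset κ))
      (sets := fun p => E j p.1)
      (fun p hp => hEmeas j hj p.1)
    have h2 : (⋂ p ∈ Finset.univ ×ˢ ({j} : Finset κ), f p ⁻¹' E j p.1) =
        ⋂ s : ι, f (s, j) ⁻¹' E j s := by
      ext ω
      simp only [Set.mem_iInter, Finset.mem_product, Finset.mem_univ, true_and,
        Finset.mem_singleton]
      constructor
      · intro hω s; exact hω (s, j) rfl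
      · rintro hω ⟨s, j'⟩ rfl; exact hω s
    rw [hEeq j hj, ← h2, h1, Finset.prod_product_right]
    simp
  rw [hset_eq, hmain, Finset.prod_product_right]
  refine (Finset.prod_congr rfl fun j hj => ?_).symm
  rw [hsingle j hj]

end Aux

set_option maxHeartbeats 1000000 in
/-- independence, boundedness, variance bound and Bernstein-type upper-tail
concentration for the Good–Turing statistic. -/
theorem good_turing_upper_concentration
    {Ω : Type*} [MeasurableSpace Ω] (μ : Measure Ω) [IsProbabilityMeasure μ]
    {J : Type*} [Fintype J] {m : ℕ}
    (lam : J → ℝ) (hlam : ∀ j, 0 < lam j)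
    (alph : Fin m → ℝ) (halph : ∀ s, 0 < alph s)
    (N : Fin m → J → Ω → ℕ)
    (hMeas : ∀ s j, Measurable (N s j))
    (hIndep : iIndepFun (fun q : Fin m × J => N q.1 q.2) μ)
    (hDist : ∀ s j, μ.map (N s j) = poissonMeasure (lam j * alph s).toNNReal)
    (A Λ : ℝ) (hA : A = ∑ s, alph s) (hΛ : Λ = ∑ j, lam j)
    (a : Fin m → ℝ) (ha : ∀ s, 0 ≤ a s)
    (X : J → Ω → ℝ)
    (hX : ∀ j ω, X j ω =
      ∑ s, a s * (if N s j ω = 1 ∧ ∀ l, l ≠ s → N l j ω = 0 then (1 : ℝ) else 0))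
    (G : Ω → ℝ) (hG : ∀ ω, G ω = ∑ j, X j ω)
    (b v : ℝ) (hb : b = ∑ s, a s) (hv : v = (∑ s, (a s) ^ 2 * alph s) * Λ) :
    iIndepFun X μ ∧
    (∀ j, ∀ᵐ ω ∂μ, 0 ≤ X j ω ∧ X j ω ≤ b) ∧
    (∑ j, ∫ ω, (X j ω) ^ 2 ∂μ ≤ v) ∧
    (∀ δ ∈ Set.Ioo (0 : ℝ) 1,
      μ {ω | G ω - (∫ ω', G ω' ∂μ) >
          Real.sqrt (2 * v * Real.log (1 / δ)) + (b / 3) * Real.log (1 / δ)} ≤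
        ENNReal.ofReal δ) := by
  classical
  have hb0 : 0 ≤ b := hb ▸ Finset.sum_nonneg fun s _ => ha s
  -- the hapax events
  set H : Fin m → J → Set Ω :=
    fun s j => {ω | N s j ω = 1 ∧ ∀ l, l ≠ s → N l j ω = 0} with hH
  have hHmeas : ∀ s j, MeasurableSet (H s j) := by
    intro s j
    have heq : H s j = (N s j ⁻¹' {1}) ∩ ⋂ l, {ω | l ≠ s → N l j ω = 0} := by
      ext ω; simp [hH, Set.mem_iInter]
    rw [heq]
    refine ((hMeas s j) (measurableSet_singleton 1)).inter (MeasurableSet.iInter fun l => ?_)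
    by_cases hl : l = s
    · simp [hl]
    · have : {ω | l ≠ s → N l j ω = 0} = N l j ⁻¹' {0} := by ext ω; simp [hl]
      rw [this]; exact (hMeas l j) (measurableSet_singleton 0)
  have hXmeas : ∀ j, Measurable (X j) := by
    intro j
    have : X j = fun ω => ∑ s, a s *
        (if N s j ω = 1 ∧ ∀ l, l ≠ s → N l j ω = 0 then (1 : ℝ) else 0) :=
      funext fun ω => hX j ω
    rw [this]
    exact Finset.measurable_sum _ fun s _ =>
      (Measurable.ite (hHmeas s j) measurable_const measurable_const).const_mul _
  have hX0 : ∀ j ω, 0 ≤ X j ω := by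
    intro j ω
    rw [hX]
    exact Finset.sum_nonneg fun s _ => mul_nonneg (ha s) (by positivity)
  have hXb : ∀ j ω, X j ω ≤ b := by
    intro j ω
    rw [hX, hb]
    refine Finset.sum_le_sum fun s _ => ?_
    have : (if N s j ω = 1 ∧ ∀ l, l ≠ s → N l j ω = 0 then (1:ℝ) else 0) ≤ 1 := by
      split <;> norm_num
    calc a s * _ ≤ a s * 1 := by exact mul_le_mul_of_nonneg_left this (ha s)
    _ = a s := mul_one _
  -- integrability helper
  have hint : ∀ (f : Ω → ℝ) (C : ℝ), Measurable f → (∀ ω, ‖f ω‖ ≤ C) → Integrable f μ := by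
    intro f C hf hC
    exact (integrable_const C).mono' hf.aestronglyMeasurable (ae_of_all _ hC)
  have hXint : ∀ j, Integrable (X j) μ := fun j =>
    hint _ b (hXmeas j) fun ω => by
      rw [Real.norm_eq_abs, abs_le]; exact ⟨by linarith [hX0 j ω, hb0], hXb j ω⟩
  have hX2int : ∀ j, Integrable (fun ω => X j ω ^ 2) μ := fun j =>
    hint _ (b ^ 2) ((hXmeas j).pow_const 2) fun ω => by
      rw [Real.norm_eq_abs, abs_le]
      constructor
      · nlinarith [hX0 j ω, hXb j ω, hb0]
      · nlinarith [hX0 j ω, hXb j ω, hb0]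
  -- Part 1 : independence
  have part1 : iIndepFun X μ := by
    have hYindep := iIndepFun_grouping (fun q : Fin m × J => N q.1 q.2)
      (fun p => hMeas p.1 p.2) hIndep
    set g : J → (Fin m → ℕ) → ℝ := fun j w =>
      ∑ s, a s * (if w s = 1 ∧ ∀ l, l ≠ s → w l = 0 then (1 : ℝ) else 0) with hg
    have hgmeas : ∀ j, Measurable (g j) := by
      intro j
      refine Finset.measurable_sum _ fun s _ => Measurable.const_mul ?_ _
      refine Measurable.ite ?_ measurable_const measurable_const
      have heq : {w : Fin m → ℕ | w s = 1 ∧ ∀ l, l ≠ s → w l = 0} =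
          ((fun w : Fin m → ℕ => w s) ⁻¹' {1}) ∩ ⋂ l, {w : Fin m → ℕ | l ≠ s → w l = 0} := by
        ext w; simp [Set.mem_iInter]
      rw [heq]
      refine ((measurable_pi_apply s) (measurableSet_singleton 1)).inter
        (MeasurableSet.iInter fun l => ?_)
      by_cases hl : l = s
      · simp [hl]
      · have : {w : Fin m → ℕ | l ≠ s → w l = 0} = (fun w : Fin m → ℕ => w l) ⁻¹' {0} := by
          ext w; simp [hl]
        rw [this]; exact (measurable_pi_apply l) (measurableSet_singleton 0)
    have hcomp := hYindep.comp g hgmeas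
    have hXeq : X = fun j => g j ∘ (fun ω (s : Fin m) => N s j ω) := by
      funext j ω
      rw [hX j ω]
      simp only [Function.comp_apply, hg]
    rw [hXeq]
    exact hcomp
  -- second moments
  have hXsq : ∀ j ω, X j ω ^ 2 = ∑ s, (a s) ^ 2 *
      (if N s j ω = 1 ∧ ∀ l, l ≠ s → N l j ω = 0 then (1 : ℝ) else 0) := by
    intro j ω
    by_cases hex : ∃ s, N s j ω = 1 ∧ ∀ l, l ≠ s → N l j ω = 0
    · obtain ⟨s0, hs0⟩ := hex
      have huniq : ∀ s, s ≠ s0 → ¬(N s j ω = 1 ∧ ∀ l, l ≠ s → N l j ω = 0) := by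
        intro s hs hcon
        have h1 := hcon.2 s0 (fun hcontra => hs hcontra.symm)
        rw [hs0.1] at h1
        exact one_ne_zero h1
      have hXval : X j ω = a s0 := by
        rw [hX]
        rw [Finset.sum_eq_single s0]
        · rw [if_pos hs0, mul_one]
        · intro s _ hs
          rw [if_neg (huniq s hs), mul_zero]
        · intro hmem; exact absurd (Finset.mem_univ s0) hmem
      rw [hXval]
      rw [Finset.sum_eq_single s0]
      · rw [if_pos hs0, mul_one]
      · intro s _ hs
        rw [if_neg (huniq s hs), mul_zero]
      · intro hmem; exact absurd (Finset.mem_univ s0) hmem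
    · push_neg at hex
      have hXval : X j ω = 0 := by
        rw [hX]
        refine Finset.sum_eq_zero fun s _ => ?_
        rw [if_neg, mul_zero]
        intro hcon
        obtain ⟨l, hl, hl0⟩ := hex s hcon.1
        exact hl0 (hcon.2 l hl)
      rw [hXval]
      rw [Finset.sum_eq_zero fun s _ => ?_]
      · norm_num
      · rw [if_neg, mul_zero]
        intro hcon
        obtain ⟨l, hl, hl0⟩ := hex s hcon.1
        exact hl0 (hcon.2 l hl)
  have hEind : ∀ s j, ∫ ω, (if N s j ω = 1 ∧ ∀ l, l ≠ s → N l j ω = 0 then (1:ℝ) else 0) ∂μ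
      = (μ (H s j)).toReal := by
    intro s j
    have heq : (fun ω => (if N s j ω = 1 ∧ ∀ l, l ≠ s → N l j ω = 0 then (1:ℝ) else 0)) =
        (H s j).indicator (1 : Ω → ℝ) := by
      funext ω
      rw [Set.indicator_apply]
      have hmem : (ω ∈ H s j) ↔ (N s j ω = 1 ∧ ∀ l, l ≠ s → N l j ω = 0) := Iff.rfl
      by_cases hω : N s j ω = 1 ∧ ∀ l, l ≠ s → N l j ω = 0
      · rw [if_pos hω, if_pos (hmem.mpr hω), Pi.one_apply]
      · rw [if_neg hω, if_neg (fun hc => hω (hmem.mp hc))]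
    rw [heq, MeasureTheory.integral_indicator_one (hHmeas s j), measureReal_def]
  have hPle : ∀ s j, (μ (H s j)).toReal ≤ lam j * alph s := by
    intro s j
    have hr0 : 0 ≤ lam j * alph s := le_of_lt (mul_pos (hlam j) (halph s))
    have hsub : H s j ⊆ N s j ⁻¹' {1} := fun ω hω => hω.1
    have hmap : μ (N s j ⁻¹' {1}) = poissonMeasure (lam j * alph s).toNNReal {1} := by
      rw [← hDist s j, Measure.map_apply (hMeas s j) (measurableSet_singleton 1)]
    have hpois : poissonMeasure (lam j * alph s).toNNReal {1} =
        ENNReal.ofReal (poissonPMFReal (lam j * alph s).toNNReal 1) := by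
      rw [poissonMeasure_singleton]
      rfl
    have hval : poissonPMFReal (lam j * alph s).toNNReal 1 ≤ lam j * alph s := by
      rw [poissonPMFReal]
      have hcoe : ((lam j * alph s).toNNReal : ℝ) = lam j * alph s := Real.coe_toNNReal _ hr0
      rw [hcoe]
      have h1 : Real.exp (-(lam j * alph s)) ≤ 1 := by
        rw [Real.exp_le_one_iff]; linarith
      calc Real.exp (-(lam j * alph s)) * (lam j * alph s) ^ 1 / (Nat.factorial 1)
          = Real.exp (-(lam j * alph s)) * (lam j * alph s) := by
            simp [Nat.factorial]
      _ ≤ 1 * (lam j * alph s) := mul_le_mul_of_nonneg_right h1 hr0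
      _ = lam j * alph s := one_mul _
    calc (μ (H s j)).toReal ≤ (μ (N s j ⁻¹' {1})).toReal := by
          refine ENNReal.toReal_mono (measure_ne_top μ _) (measure_mono hsub)
    _ = (ENNReal.ofReal (poissonPMFReal (lam j * alph s).toNNReal 1)).toReal := by
          rw [hmap, hpois]
    _ = poissonPMFReal (lam j * alph s).toNNReal 1 :=
          ENNReal.toReal_ofReal poissonPMFReal_nonneg
    _ ≤ lam j * alph s := hval
  have hindint : ∀ s j, Integrable
      (fun ω => (if N s j ω = 1 ∧ ∀ l, l ≠ s → N l j ω = 0 then (1:ℝ) else 0)) μ := by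
    intro s j
    refine hint _ 1 (Measurable.ite (hHmeas s j) measurable_const measurable_const) fun ω => ?_
    rw [Real.norm_eq_abs, abs_le]
    constructor <;> split <;> norm_num
  have hEX2 : ∀ j, ∫ ω, X j ω ^ 2 ∂μ ≤ ∑ s, a s ^ 2 * (lam j * alph s) := by
    intro j
    have h1 : ∫ ω, X j ω ^ 2 ∂μ = ∑ s, a s ^ 2 * (μ (H s j)).toReal := by
      rw [show (fun ω => X j ω ^ 2) = fun ω => ∑ s, (a s) ^ 2 *
          (if N s j ω = 1 ∧ ∀ l, l ≠ s → N l j ω = 0 then (1 : ℝ) else 0)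
        from funext fun ω => hXsq j ω]
      rw [integral_finset_sum _ fun s _ => (hindint s j).const_mul _]
      refine Finset.sum_congr rfl fun s _ => ?_
      rw [integral_const_mul, hEind s j]
    rw [h1]
    refine Finset.sum_le_sum fun s _ => ?_
    exact mul_le_mul_of_nonneg_left (hPle s j) (by positivity)
  have part3 : ∑ j, ∫ ω, (X j ω) ^ 2 ∂μ ≤ v := by
    calc ∑ j, ∫ ω, (X j ω) ^ 2 ∂μ ≤ ∑ j, ∑ s, a s ^ 2 * (lam j * alph s) :=
          Finset.sum_le_sum fun j _ => hEX2 j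
    _ = v := by
        rw [hv, hΛ, Finset.sum_comm, Finset.sum_mul]
        refine Finset.sum_congr rfl fun s _ => ?_
        rw [Finset.mul_sum]
        refine Finset.sum_congr rfl fun j _ => ?_
        ring
  refine ⟨part1, fun j => ae_of_all _ fun ω => ⟨hX0 j ω, hXb j ω⟩, part3, ?_⟩
  -- Part 4 : Bernstein-type concentration
  intro δ hδ
  obtain ⟨hδ0, hδ1⟩ := hδ
  set t := Real.log (1 / δ) with htdef
  have ht0 : 0 < t := Real.log_pos (by rw [lt_div_iff₀ hδ0]; linarith)
  have hexpt : Real.exp (-t) = δ := by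
    rw [htdef, one_div, Real.log_inv, neg_neg, Real.exp_log hδ0]
  have hΛ0 : 0 ≤ Λ := hΛ ▸ Finset.sum_nonneg fun j _ => (hlam j).le
  have hv0 : 0 ≤ v := by
    rw [hv]
    exact mul_nonneg (Finset.sum_nonneg fun s _ =>
      mul_nonneg (by positivity) (halph s).le) hΛ0
  rcases eq_or_lt_of_le hv0 with hveq | hvpos
  · -- degenerate case `v = 0` : all the `X j` vanish identically
    have hG0 : ∀ ω, G ω = 0 := by
      have hmul : (∑ s, (a s) ^ 2 * alph s) * Λ = 0 := by rw [← hv, ← hveq]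
      rcases mul_eq_zero.mp hmul with hca | hΛz
      · have haz : ∀ s, a s = 0 := by
          intro s
          have hterm := (Finset.sum_eq_zero_iff_of_nonneg
            (fun s _ => mul_nonneg (by positivity) (halph s).le)).mp hca s (Finset.mem_univ s)
          rcases mul_eq_zero.mp hterm with h1 | h2
          · exact (pow_eq_zero_iff (two_ne_zero)).mp h1
          · exact absurd h2 (ne_of_gt (halph s))
        intro ω
        rw [hG]
        refine Finset.sum_eq_zero fun j _ => ?_
        rw [hX]
        exact Finset.sum_eq_zero fun s _ => by rw [haz s, zero_mul]
      · have hempty : IsEmpty J := by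
          by_contra hne
          rw [not_isEmpty_iff] at hne
          obtain ⟨j⟩ := hne
          have h1 : 0 < ∑ j, lam j :=
            Finset.sum_pos (fun j _ => hlam j) ⟨j, Finset.mem_univ j⟩
          rw [← hΛ] at h1
          linarith
        intro ω
        rw [hG, Finset.univ_eq_empty, Finset.sum_empty]
    have hEG0 : ∫ ω', G ω' ∂μ = 0 := by
      rw [show G = fun _ => (0:ℝ) from funext hG0]
      simp
    have hsetempty : {ω | G ω - (∫ ω', G ω' ∂μ) >
        Real.sqrt (2 * v * Real.log (1 / δ)) + (b / 3) * Real.log (1 / δ)} = ∅ := by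
      ext ω
      simp only [Set.mem_setOf_eq, Set.mem_empty_iff_false, iff_false, not_lt]
      rw [hG0 ω, hEG0, sub_zero]
      have h1 : 0 ≤ Real.sqrt (2 * v * Real.log (1 / δ)) := Real.sqrt_nonneg _
      have h2 : 0 ≤ (b / 3) * Real.log (1 / δ) :=
        mul_nonneg (by linarith) (le_of_lt ht0)
      linarith
    rw [hsetempty]
    simp
  · -- main case `v > 0`
    have hbpos : 0 < b := by
      rcases lt_or_eq_of_le hb0 with h | h
      · exact h
      · exfalso
        have haz : ∀ s, a s = 0 := fun s =>
          (Finset.sum_eq_zero_iff_of_nonneg (fun s _ => ha s)).mp (hb.symm.trans h.symm) s (Finset.mem_univ s)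
        have : v = 0 := by
          rw [hv, Finset.sum_eq_zero fun s _ => by rw [haz s]; ring, zero_mul]
        linarith
    set c := b / 3 with hc
    have hcpos : 0 < c := by positivity
    set s0 := Real.sqrt (2 * t / v) with hs0
    have hs0pos : 0 < s0 := Real.sqrt_pos.mpr (by positivity)
    have hden : 0 < 1 + c * s0 := by positivity
    have hden' : (1 + c * s0) ≠ 0 := ne_of_gt hden
    set L := s0 / (1 + c * s0) with hL
    have hLpos : 0 < L := div_pos hs0pos hden
    set D := 2 * (1 - c * L) with hD
    have hsq : v * s0 ^ 2 = 2 * t := by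
      rw [hs0, Real.sq_sqrt (by positivity)]
      field_simp
    have hsqrt : Real.sqrt (2 * v * t) = v * s0 := by
      rw [show 2 * v * t = (v * s0) ^ 2 by nlinarith [hsq], Real.sqrt_sq (by positivity)]
    have hcL : c * L < 1 := by
      rw [hL, mul_div_assoc', div_lt_one hden]
      linarith
    have hDpos : 0 < D := by rw [hD]; linarith
    have hLb : L * b < 3 := by
      have h3 : L * b = 3 * (c * L) := by rw [hc]; ring
      rw [h3]; linarith
    set ε := Real.sqrt (2 * v * t) + c * t with hε
    have hε0 : 0 ≤ ε := by
      rw [hε]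
      have := Real.sqrt_nonneg (2 * v * t)
      nlinarith
    -- pointwise exponential inequality
    have hptw : ∀ j ω, Real.exp (L * X j ω) ≤ 1 + L * X j ω + X j ω ^ 2 * (L ^ 2 / D) := by
      intro j ω
      set u := L * X j ω with hu
      have hu0 : 0 ≤ u := mul_nonneg hLpos.le (hX0 j ω)
      have hub : u ≤ L * b := mul_le_mul_of_nonneg_left (hXb j ω) hLpos.le
      have hu3 : u < 3 := lt_of_le_of_lt hub hLb
      have h1 := exp_le_one_add_add_sq hu0 hu3
      have hcLu : u / 3 ≤ c * L := by
        have : L * b = 3 * (c * L) := by rw [hc]; ring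
        rw [this] at hub
        linarith
      have h2 : u ^ 2 / (2 * (1 - u / 3)) ≤ u ^ 2 / D := by
        gcongr
        rw [hD]; linarith
      have h4 : u ^ 2 / D = X j ω ^ 2 * (L ^ 2 / D) := by rw [hu]; ring
      linarith
    -- integrability of the exponentials
    have hexpint : ∀ j, Integrable (fun ω => Real.exp (L * X j ω)) μ := fun j =>
      hint _ (Real.exp (L * b)) ((hXmeas j).const_mul L).exp fun ω => by
        rw [Real.norm_eq_abs, abs_of_pos (Real.exp_pos _)]
        exact Real.exp_le_exp.mpr (mul_le_mul_of_nonneg_left (hXb j ω) hLpos.le)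
    -- the per-variable mgf bound
    have hmgfj : ∀ j, mgf (X j) μ L ≤
        Real.exp (L * (∫ ω, X j ω ∂μ) + (∫ ω, X j ω ^ 2 ∂μ) * (L ^ 2 / D)) := by
      intro j
      have hrhsint : Integrable (fun ω => 1 + L * X j ω + X j ω ^ 2 * (L ^ 2 / D)) μ :=
        ((integrable_const 1).add ((hXint j).const_mul L)).add ((hX2int j).mul_const _)
      have hmono : mgf (X j) μ L ≤ ∫ ω, (1 + L * X j ω + X j ω ^ 2 * (L ^ 2 / D)) ∂μ :=
        integral_mono (hexpint j) hrhsint fun ω => hptw j ω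
      have hcalc : ∫ ω, (1 + L * X j ω + X j ω ^ 2 * (L ^ 2 / D)) ∂μ =
          1 + L * (∫ ω, X j ω ∂μ) + (∫ ω, X j ω ^ 2 ∂μ) * (L ^ 2 / D) := by
        have e1 : ∫ ω, (1 + L * X j ω + X j ω ^ 2 * (L ^ 2 / D)) ∂μ
            = (∫ ω, (1 + L * X j ω) ∂μ) + ∫ ω, X j ω ^ 2 * (L ^ 2 / D) ∂μ :=
          integral_add ((integrable_const 1).add ((hXint j).const_mul L))
            ((hX2int j).mul_const _)
        have e2 : ∫ ω, (1 + L * X j ω) ∂μ = (∫ _, (1:ℝ) ∂μ) + ∫ ω, L * X j ω ∂μ :=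
          integral_add (integrable_const 1) ((hXint j).const_mul L)
        rw [e1, e2, integral_const, integral_const_mul, integral_mul_const]
        simp
      have hfin := Real.add_one_le_exp
        (L * (∫ ω, X j ω ∂μ) + (∫ ω, X j ω ^ 2 ∂μ) * (L ^ 2 / D))
      linarith
    -- mgf of G factorizes
    have hGfun : G = ∑ j, X j := by
      funext ω
      rw [hG ω, Finset.sum_apply]
    have hGmeas : Measurable G := by
      rw [show G = fun ω => ∑ j, X j ω from funext hG]
      exact Finset.measurable_sum _ fun j _ => hXmeas j
    have hmgfG : mgf G μ L = ∏ j, mgf (X j) μ L := by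
      rw [hGfun]
      exact part1.mgf_sum hXmeas Finset.univ
    -- integrability of exp (L * G)
    have hGub : ∀ ω, G ω ≤ (Fintype.card J : ℝ) * b := by
      intro ω
      rw [hG]
      calc ∑ j, X j ω ≤ Finset.univ.card • b :=
            Finset.sum_le_card_nsmul _ _ b fun j _ => hXb j ω
      _ = (Fintype.card J : ℝ) * b := by
            rw [nsmul_eq_mul, Finset.card_univ]
    have hGint : Integrable (fun ω => Real.exp (L * G ω)) μ :=
      hint _ (Real.exp (L * ((Fintype.card J : ℝ) * b))) (hGmeas.const_mul L).exp fun ω => by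
        rw [Real.norm_eq_abs, abs_of_pos (Real.exp_pos _)]
        exact Real.exp_le_exp.mpr (mul_le_mul_of_nonneg_left (hGub ω) hLpos.le)
    set EG := ∫ ω', G ω' ∂μ with hEGdef
    have hEGsum : EG = ∑ j, ∫ ω, X j ω ∂μ := by
      rw [hEGdef, show G = fun ω => ∑ j, X j ω from funext hG]
      exact integral_finset_sum _ fun j _ => hXint j
    -- Chernoff bound
    have hchern := measure_ge_le_exp_mul_mgf (X := G) (μ := μ) (t := L)
      (EG + ε) hLpos.le hGint
    -- bound the product of mgfs
    have hprod : ∏ j, mgf (X j) μ L ≤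
        Real.exp (L * EG + (∑ j, ∫ ω, X j ω ^ 2 ∂μ) * (L ^ 2 / D)) := by
      calc ∏ j, mgf (X j) μ L
          ≤ ∏ j, Real.exp (L * (∫ ω, X j ω ∂μ) + (∫ ω, X j ω ^ 2 ∂μ) * (L ^ 2 / D)) :=
            Finset.prod_le_prod (fun j _ => mgf_nonneg) (fun j _ => hmgfj j)
      _ = Real.exp (∑ j, (L * (∫ ω, X j ω ∂μ) + (∫ ω, X j ω ^ 2 ∂μ) * (L ^ 2 / D))) :=
            (Real.exp_sum _ _).symm
      _ = Real.exp (L * EG + (∑ j, ∫ ω, X j ω ^ 2 ∂μ) * (L ^ 2 / D)) := by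
            rw [Finset.sum_add_distrib, ← Finset.mul_sum, ← Finset.sum_mul, ← hEGsum]
    -- final numeric computation
    have hDalt : D = 2 / (1 + c * s0) := by
      rw [hD, hL]
      field_simp
      ring
    have hLD : v * (L ^ 2 / D) = t / (1 + c * s0) := by
      rw [hL, hDalt]
      field_simp
      linear_combination hsq
    have hLε : L * ε = (2 * t + c * s0 * t) / (1 + c * s0) := by
      rw [hε, hsqrt, hL]
      field_simp
      linear_combination hsq
    have hkey : -(L * ε) + v * (L ^ 2 / D) = -t := by
      rw [hLε, hLD]
      field_simp
      ring
    have hfinal : (μ {ω | EG + ε ≤ G ω}).toReal ≤ δ := by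
      have hS : (∑ j, ∫ ω, X j ω ^ 2 ∂μ) * (L ^ 2 / D) ≤ v * (L ^ 2 / D) :=
        mul_le_mul_of_nonneg_right part3 (by positivity)
      calc (μ {ω | EG + ε ≤ G ω}).toReal
          ≤ Real.exp (-L * (EG + ε)) * mgf G μ L := hchern
      _ ≤ Real.exp (-L * (EG + ε)) *
            Real.exp (L * EG + (∑ j, ∫ ω, X j ω ^ 2 ∂μ) * (L ^ 2 / D)) := by
            rw [hmgfG]
            exact mul_le_mul_of_nonneg_left hprod (Real.exp_pos _).le
      _ = Real.exp (-L * (EG + ε) + (L * EG + (∑ j, ∫ ω, X j ω ^ 2 ∂μ) * (L ^ 2 / D))) :=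
            (Real.exp_add _ _).symm
      _ ≤ Real.exp (-t) := by
            apply Real.exp_le_exp.mpr
            have : -L * (EG + ε) + (L * EG + v * (L ^ 2 / D)) = -t := by
              rw [show -L * (EG + ε) + (L * EG + v * (L ^ 2 / D)) =
                -(L * ε) + v * (L ^ 2 / D) by ring, hkey]
            linarith
      _ = δ := hexpt
    have hsub : {ω | G ω - EG >
        Real.sqrt (2 * v * Real.log (1 / δ)) + (b / 3) * Real.log (1 / δ)} ⊆
        {ω | EG + ε ≤ G ω} := by
      intro ω hω
      simp only [Set.mem_setOf_eq] at hω ⊢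
      rw [hε]
      have h1 : Real.sqrt (2 * v * t) = Real.sqrt (2 * v * Real.log (1 / δ)) := by rw [htdef]
      have h2 : c * t = b / 3 * Real.log (1 / δ) := by rw [hc, htdef]
      rw [h1, h2]
      linarith
    calc μ {ω | G ω - EG >
        Real.sqrt (2 * v * Real.log (1 / δ)) + (b / 3) * Real.log (1 / δ)}
        ≤ μ {ω | EG + ε ≤ G ω} := measure_mono hsub
    _ = ENNReal.ofReal ((μ {ω | EG + ε ≤ G ω}).toReal) :=
          (ENNReal.ofReal_toReal (measure_ne_top μ _)).symm
    _ ≤ ENNReal.ofReal δ := ENNReal.ofReal_le_ofReal hfinal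
end
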